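/- Let D be a division ring that is a ℚ-algebra, and let X, Y ∈ D with Y ≠ 0 and X·Y = Y·(X + 1). Then (Y⁻¹X)·Y − Y·(Y⁻¹X) = 1, and there exists an injective ℚ-algebra homomorphism φ : A₁(ℚ) → D with φ(s) = Y⁻¹X and φ(t) = Y. -/

import Mathlib

open Polynomial

set_option linter.unusedSectionVars false

namespace WeylEmbedAux

section aux
variable {A : Type*} [Ring A] [Algebra ℚ A]

/-- z^n * y = y * z^n + n • z^(n-1) -/
lemma pow_comm_aux {z y : A} (h : z * y = y * z + 1) :
    ∀ n : ℕ, z ^ n * y = y * z ^ n + n • z ^ (n - 1) := by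
  intro n
  induction n with
  | zero => simp
  | succ n ih =>
    have h1 : z ^ (n + 1) * y = z ^ n * (z * y) := by
      rw [pow_succ, mul_assoc]
    rw [h1, h, mul_add, mul_one, ← mul_assoc, ih, add_mul, smul_mul_assoc]
    cases n with
    | zero => simp
    | succ m =>
      rw [Nat.succ_sub_one, Nat.succ_sub_one, ← pow_succ, succ_nsmul (z ^ (m+1)) (m+1),
        mul_assoc, ← pow_succ]
      abel

/-- z * y^n = y^n * z + n • y^(n-1) -/
lemma comm_pow_aux {z y : A} (h : z * y = y * z + 1) :
    ∀ n : ℕ, z * y ^ n = y ^ n * z + n • y ^ (n - 1) := by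
  intro n
  induction n with
  | zero => simp
  | succ n ih =>
    have h1 : z * y ^ (n + 1) = (z * y ^ n) * y := by
      rw [pow_succ, mul_assoc]
    rw [h1, ih, add_mul, mul_assoc, h, mul_add, mul_one, ← mul_assoc, ← pow_succ, smul_mul_assoc]
    cases n with
    | zero => simp
    | succ m =>
      rw [Nat.succ_sub_one, Nat.succ_sub_one, ← pow_succ, succ_nsmul (y ^ (m+1)) (m+1)]
      abel

lemma commute_aeval (y : A) (q : ℚ[X]) : Commute (aeval y q) y := by
  induction q using Polynomial.induction_on' with
  | add p q hp hq => simpa [map_add] using hp.add_left hq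
  | monomial n a =>
    simp only [aeval_monomial]
    exact Commute.mul_left (Algebra.commutes a y) ((Commute.refl y).pow_left n)

/-- The "normal form" evaluation map sending `Σ qⱼ(u) vʲ` to `Σ qⱼ(y) zʲ`. -/
noncomputable def Emap (z y : A) (f : (ℚ[X])[X]) : A :=
  eval₂ ((aeval y : ℚ[X] →ₐ[ℚ] A).toRingHom) z f

variable (z y : A)

lemma Emap_add (f g : (ℚ[X])[X]) : Emap z y (f + g) = Emap z y f + Emap z y g :=
  eval₂_add _ _

lemma Emap_monomial (n : ℕ) (q : ℚ[X]) : Emap z y (monomial n q) = aeval y q * z ^ n :=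
  eval₂_monomial _ _

lemma Emap_C (q : ℚ[X]) : Emap z y (C q) = aeval y q := eval₂_C _ _

lemma Emap_zero : Emap z y 0 = 0 := eval₂_zero _ _

lemma Emap_one : Emap z y 1 = 1 := eval₂_one _ _

lemma Emap_mul_X (f : (ℚ[X])[X]) : Emap z y f * z = Emap z y (f * X) :=
  (eval₂_mul_X _ _).symm

lemma Emap_Y_mul (f : (ℚ[X])[X]) : y * Emap z y f = Emap z y (C X * f) := by
  induction f using Polynomial.induction_on' with
  | add p q hp hq => rw [Emap_add, mul_add, hp, hq, mul_add, Emap_add]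
  | monomial n a =>
    rw [C_mul_monomial, Emap_monomial, Emap_monomial, map_mul, aeval_X, ← mul_assoc]

lemma Emap_algebraMap_mul (r : ℚ) (f : (ℚ[X])[X]) :
    algebraMap ℚ A r * Emap z y f = Emap z y (C (C r) * f) := by
  induction f using Polynomial.induction_on' with
  | add p q hp hq => rw [Emap_add, mul_add, hp, hq, mul_add, Emap_add]
  | monomial n a =>
    rw [C_mul_monomial, Emap_monomial, Emap_monomial, map_mul, aeval_C, ← mul_assoc]

variable {z y} (h : z * y = y * z + 1)
include h

lemma Emap_mul_Y (f : (ℚ[X])[X]) :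
    Emap z y f * y = Emap z y (C X * f + derivative f) := by
  induction f using Polynomial.induction_on' with
  | add p q hp hq =>
    rw [Emap_add, add_mul, hp, hq, ← Emap_add]
    congr 1
    rw [derivative_add, mul_add]
    ring
  | monomial n a =>
    rw [Emap_monomial, mul_assoc, pow_comm_aux h, mul_add, ← mul_assoc,
      (commute_aeval y a).eq, Emap_add, C_mul_monomial, Emap_monomial, map_mul, aeval_X,
      derivative_monomial, Emap_monomial, mul_assoc]
    congr 1
    rw [map_mul, map_natCast, nsmul_eq_mul, ← mul_assoc]

lemma Emap_delta (f : (ℚ[X])[X]) :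
    Emap z y f * y - y * Emap z y f = Emap z y (derivative f) := by
  rw [Emap_mul_Y h, Emap_Y_mul, Emap_add, add_sub_cancel_left]

lemma ad_aeval (q : ℚ[X]) :
    z * aeval y q - aeval y q * z = aeval y (derivative q) := by
  induction q using Polynomial.induction_on' with
  | add p q hp hq =>
    rw [map_add, derivative_add, map_add, ← hp, ← hq, mul_add, add_mul]
    abel
  | monomial n a =>
    rw [aeval_monomial, ← mul_assoc, ← (Algebra.commutes a z), mul_assoc,
      comm_pow_aux h, derivative_monomial, aeval_monomial, mul_add, ← mul_assoc]
    rw [add_sub_cancel_left, map_mul, map_natCast, nsmul_eq_mul, ← mul_assoc]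

end aux

section div
variable {D : Type*} [DivisionRing D] [Algebra ℚ D] {z y : D} (h : z * y = y * z + 1)
include h

lemma aeval_y_injective : ∀ (q : ℚ[X]), aeval y q = 0 → q = 0 := by
  suffices H : ∀ (n : ℕ) (q : ℚ[X]), q.natDegree ≤ n → aeval y q = 0 → q = 0 by
    intro q hq; exact H q.natDegree q le_rfl hq
  intro n
  induction n with
  | zero =>
    intro q hdeg hq
    rw [Polynomial.eq_C_of_natDegree_le_zero hdeg] at hq ⊢
    rw [aeval_C] at hq
    have : q.coeff 0 = 0 := (algebraMap ℚ D).injective (by simpa using hq)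
    rw [this, map_zero]
  | succ n ih =>
    intro q hdeg hq
    have hd : aeval y (derivative q) = 0 := by
      rw [← ad_aeval h, hq]; simp
    have hd0 : derivative q = 0 :=
      ih _ (le_trans (Polynomial.natDegree_derivative_le q) (by omega)) hd
    have h0 : q.natDegree = 0 := Polynomial.natDegree_eq_zero_of_derivative_eq_zero hd0
    rw [Polynomial.eq_C_of_natDegree_le_zero h0.le] at hq ⊢
    rw [aeval_C] at hq
    have : q.coeff 0 = 0 := (algebraMap ℚ D).injective (by simpa using hq)
    rw [this, map_zero]

lemma Emap_injective : ∀ (f : (ℚ[X])[X]), Emap z y f = 0 → f = 0 := by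
  suffices H : ∀ (n : ℕ) (f : (ℚ[X])[X]), f.natDegree ≤ n → Emap z y f = 0 → f = 0 by
    intro f hf; exact H f.natDegree f le_rfl hf
  intro n
  induction n with
  | zero =>
    intro f hdeg hf
    rw [Polynomial.eq_C_of_natDegree_le_zero hdeg] at hf ⊢
    rw [Emap_C] at hf
    rw [aeval_y_injective h _ hf, map_zero]
  | succ n ih =>
    intro f hdeg hf
    have hd : Emap z y (derivative f) = 0 := by
      rw [← Emap_delta h, hf]; simp
    have hd0 : derivative f = 0 :=
      ih _ (le_trans (Polynomial.natDegree_derivative_le f) (by omega)) hd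
    have h0 : f.natDegree = 0 := Polynomial.natDegree_eq_zero_of_derivative_eq_zero hd0
    rw [Polynomial.eq_C_of_natDegree_le_zero h0.le] at hf ⊢
    rw [Emap_C] at hf
    rw [aeval_y_injective h _ hf, map_zero]

end div

end WeylEmbedAux

/-- The defining relation of the first Weyl algebra: `s·t = t·s + 1`. -/
inductive weylRel : FreeAlgebra ℚ (Fin 2) → FreeAlgebra ℚ (Fin 2) → Prop
  | rel : weylRel (FreeAlgebra.ι ℚ 0 * FreeAlgebra.ι ℚ 1)
      (FreeAlgebra.ι ℚ 1 * FreeAlgebra.ι ℚ 0 + 1)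

/-- The first Weyl algebra `A₁(ℚ) = ℚ⟨s, t : st - ts = 1⟩`. -/
abbrev WeylAlg : Type := RingQuot weylRel

/-- The generator `s` of the first Weyl algebra. -/
noncomputable def Ws : WeylAlg := RingQuot.mkAlgHom ℚ weylRel (FreeAlgebra.ι ℚ 0)

/-- The generator `t` of the first Weyl algebra. -/
noncomputable def Wt : WeylAlg := RingQuot.mkAlgHom ℚ weylRel (FreeAlgebra.ι ℚ 1)

open WeylEmbedAux

lemma Ws_mul_Wt : Ws * Wt = Wt * Ws + 1 := by
  have := RingQuot.mkAlgHom_rel ℚ weylRel.rel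
  simpa only [Ws, Wt, map_mul, map_add, map_one] using this

lemma Emap_surjective : ∀ x : WeylAlg, ∃ f, Emap Ws Wt f = x := by
  have key : ∀ a : FreeAlgebra ℚ (Fin 2), ∀ m : WeylAlg, (∃ f, Emap Ws Wt f = m) →
      ∃ f, Emap Ws Wt f = m * RingQuot.mkAlgHom ℚ weylRel a := by
    intro a
    induction a using FreeAlgebra.induction with
    | grade0 r =>
      rintro m ⟨f, rfl⟩
      refine ⟨C (C r) * f, ?_⟩
      rw [← Emap_algebraMap_mul, AlgHom.commutes]
      exact Algebra.commutes r _
    | grade1 i =>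
      fin_cases i
      · rintro m ⟨f, rfl⟩
        exact ⟨f * X, (Emap_mul_X _ _ f).symm⟩
      · rintro m ⟨f, rfl⟩
        exact ⟨C X * f + derivative f, (Emap_mul_Y Ws_mul_Wt f).symm⟩
    | mul a b ha hb =>
      rintro m hm
      rw [map_mul, ← mul_assoc]
      exact hb _ (ha _ hm)
    | add a b ha hb =>
      rintro m hm
      obtain ⟨f, hf⟩ := ha m hm
      obtain ⟨g, hg⟩ := hb m hm
      exact ⟨f + g, by rw [Emap_add, hf, hg, map_add, mul_add]⟩
  intro x
  obtain ⟨a, rfl⟩ := RingQuot.mkAlgHom_surjective ℚ weylRel x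
  simpa using key a 1 ⟨1, Emap_one _ _⟩

theorem weyl_algebra_embeds_in_skew_quotients
    (D : Type*) [DivisionRing D] [Algebra ℚ D]
    (X Y : D) (hY : Y ≠ 0) (hXY : X * Y = Y * (X + 1)) :
    (Y⁻¹ * X) * Y - Y * (Y⁻¹ * X) = 1 ∧
    ∃ φ : WeylAlg →ₐ[ℚ] D, Function.Injective φ ∧ φ Ws = Y⁻¹ * X ∧ φ Wt = Y := by
  have h1 : (Y⁻¹ * X) * Y = X + 1 := by
    rw [mul_assoc, hXY, inv_mul_cancel_left₀ hY]
  have h2 : Y * (Y⁻¹ * X) = X := mul_inv_cancel_left₀ hY X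
  have hZY : (Y⁻¹ * X) * Y = Y * (Y⁻¹ * X) + 1 := by rw [h1, h2]
  have hrel : ∀ ⦃a b : FreeAlgebra ℚ (Fin 2)⦄, weylRel a b →
      (FreeAlgebra.lift ℚ (fun i : Fin 2 => if i = 0 then Y⁻¹ * X else Y)) a =
      (FreeAlgebra.lift ℚ (fun i : Fin 2 => if i = 0 then Y⁻¹ * X else Y)) b := by
    rintro _ _ ⟨⟩
    simp only [map_mul, map_add, map_one, FreeAlgebra.lift_ι_apply]
    norm_num
    exact hZY
  let φ : WeylAlg →ₐ[ℚ] D :=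
    RingQuot.liftAlgHom ℚ ⟨FreeAlgebra.lift ℚ (fun i : Fin 2 => if i = 0 then Y⁻¹ * X else Y), hrel⟩
  have φWs : φ Ws = Y⁻¹ * X := by
    rw [Ws, RingQuot.liftAlgHom_mkAlgHom_apply, FreeAlgebra.lift_ι_apply]
    norm_num
  have φWt : φ Wt = Y := by
    rw [Wt, RingQuot.liftAlgHom_mkAlgHom_apply, FreeAlgebra.lift_ι_apply]
    norm_num
  have φE : ∀ f, φ (Emap Ws Wt f) = Emap (Y⁻¹ * X) Y f := by
    intro f
    have hcomp : φ.toRingHom.comp ((aeval Wt : ℚ[X] →ₐ[ℚ] WeylAlg).toRingHom) =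
        (aeval Y : ℚ[X] →ₐ[ℚ] D).toRingHom := by
      refine RingHom.ext fun q => ?_
      show φ (aeval Wt q) = aeval Y q
      rw [← Polynomial.aeval_algHom_apply, φWt]
    unfold WeylEmbedAux.Emap
    calc φ (eval₂ ((aeval Wt : ℚ[X] →ₐ[ℚ] WeylAlg).toRingHom) Ws f)
        = eval₂ (φ.toRingHom.comp ((aeval Wt : ℚ[X] →ₐ[ℚ] WeylAlg).toRingHom)) (φ Ws) f :=
          Polynomial.hom_eval₂ f _ φ.toRingHom Ws
      _ = eval₂ ((aeval Y : ℚ[X] →ₐ[ℚ] D).toRingHom) (Y⁻¹ * X) f := by rw [hcomp, φWs]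
  refine ⟨by rw [h1, h2]; abel, φ, ?_, φWs, φWt⟩
  rw [injective_iff_map_eq_zero]
  intro a ha
  obtain ⟨f, rfl⟩ := Emap_surjective a
  rw [φE] at ha
  rw [Emap_injective hZY f ha, Emap_zero]
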